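/- If α ≤ (1 + λ_n(Wᵗ))/L and x_0 = 0, then for all k ≥ 1 and all i the DGDᵗ iterates satisfy ‖∇f_i(x_{i,k}) − ∇f_i(x̄_k)‖ ≤ αDL_i/(1 − βᵗ) and ‖g_k − ḡ_k‖ ≤ αDL/(1 − βᵗ), where x̄_k = (1/n)Σ_i x_{i,k}, g_k = (1/n)Σ_i ∇f_i(x_{i,k}), ḡ_k = (1/n)Σ_i ∇f_i(x̄_k), and D = √(2L Σ_i (f_i(0) − f_i*)). -/

import Mathlib

open Finset Filter

noncomputable section

/-- A block `ℝ^p` with the Euclidean norm. -/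
abbrev Vec (p : ℕ) := EuclideanSpace ℝ (Fin p)

/-- The concatenated space `ℝ^{np}` (n blocks of size p) with the Euclidean norm. -/
abbrev CVec (n p : ℕ) := PiLp 2 (fun _ : Fin n => Vec p)

/-- Action of the Kronecker product `W ⊗ I_p` on a concatenated vector of `ℝ^{np}`. -/
def kron {n p : ℕ} (W : Matrix (Fin n) (Fin n) ℝ) (x : CVec n p) : CVec n p :=
  WithLp.toLp 2 (fun i => ∑ j, W i j • x j)

/-- Concatenated gradient `∇f(x) = (∇f₁(x₁); …; ∇fₙ(xₙ))`. -/
def gradConcat {n p : ℕ} (f : Fin n → Vec p → ℝ) (x : CVec n p) : CVec n p :=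
  WithLp.toLp 2 (fun i => gradient (f i) (x i))

/-! ### Auxiliary material -/

open RealInnerProductSpace

section Aux

/-- matrix action on a Euclidean vector -/
def mvE {n : ℕ} (M : Matrix (Fin n) (Fin n) ℝ) (x : Vec n) : Vec n :=
  (WithLp.equiv 2 _).symm (M.mulVec x)

lemma mvE_apply {n : ℕ} (M : Matrix (Fin n) (Fin n) ℝ) (x : Vec n) (i : Fin n) :
    mvE M x i = ∑ j, M i j * x j := by
  simp [mvE, Matrix.mulVec, dotProduct]

lemma sum_apply_E {n p : ℕ} (y : Fin n → Vec p) (l : Fin p) : (∑ j, y j) l = ∑ j, y j l := by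
  induction (Finset.univ : Finset (Fin n)) using Finset.induction with
  | empty => rfl
  | insert _ _ h ih => simp [Finset.sum_insert h, ih]

lemma inner_E {n : ℕ} (x y : Vec n) : ⟪x, y⟫ = ∑ i, x i * y i := by
  simp [PiLp.inner_apply, RCLike.inner_apply, conj_trivial]
  exact Finset.sum_congr rfl fun _ _ => mul_comm _ _

variable {n t : ℕ}

lemma mvE_sym {M : Matrix (Fin n) (Fin n) ℝ} (hM : M.IsHermitian) (x y : Vec n) :
    ⟪mvE M x, y⟫ = ⟪x, mvE M y⟫ := by
  simp only [inner_E, mvE_apply]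
  have hsym : ∀ i j, M j i = M i j := fun i j => by
    conv_lhs => rw [← hM]
    simp [Matrix.conjTranspose_apply]
  simp only [Finset.sum_mul, Finset.mul_sum]
  rw [Finset.sum_comm]
  exact Finset.sum_congr rfl fun i _ => Finset.sum_congr rfl fun j _ => by rw [hsym i j]; ring

lemma mvE_eig {M : Matrix (Fin n) (Fin n) ℝ} (hM : M.IsHermitian) (j : Fin n) :
    mvE M (hM.eigenvectorBasis j) = hM.eigenvalues j • hM.eigenvectorBasis j := by
  ext i
  have h := congrFun (hM.mulVec_eigenvectorBasis j) i
  simp only [Matrix.mulVec, dotProduct, Pi.smul_apply,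
    smul_eq_mul] at h
  simp [mvE_apply, PiLp.smul_apply, smul_eq_mul, h]

lemma inner_mvE_eig {M : Matrix (Fin n) (Fin n) ℝ} (hM : M.IsHermitian) (j : Fin n) (v : Vec n) :
    ⟪hM.eigenvectorBasis j, mvE M v⟫ = hM.eigenvalues j * ⟪hM.eigenvectorBasis j, v⟫ := by
  rw [← mvE_sym hM, mvE_eig hM, real_inner_smul_left]

lemma inner_mvE_pow_eig {M : Matrix (Fin n) (Fin n) ℝ} (hM : M.IsHermitian) (j : Fin n)
    (t : ℕ) (v : Vec n) :
    ⟪hM.eigenvectorBasis j, mvE (M ^ t) v⟫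
      = hM.eigenvalues j ^ t * ⟪hM.eigenvectorBasis j, v⟫ := by
  induction t with
  | zero => simp [mvE, Matrix.mulVec]
  | succ s ih =>
      have h2 : mvE (M ^ (s+1)) v = mvE M (mvE (M ^ s) v) := by
        ext i
        simp only [mvE_apply, pow_succ', Matrix.mul_apply, Finset.sum_mul, Finset.mul_sum]
        rw [Finset.sum_comm]
        exact Finset.sum_congr rfl fun a _ => Finset.sum_congr rfl fun b _ => by ring
      rw [h2, inner_mvE_eig hM, ih, pow_succ']
      ring

lemma parseval_inner {m : ℕ} (b : OrthonormalBasis (Fin m) ℝ (Vec m)) (x y : Vec m) :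
    ⟪x, y⟫ = ∑ i, ⟪b i, x⟫ * ⟪b i, y⟫ := by
  rw [← b.sum_inner_mul_inner x y]
  exact Finset.sum_congr rfl fun i _ => by rw [real_inner_comm x (b i)]

def onesE (n : ℕ) : Vec n := WithLp.toLp 2 (fun _ => (1 : ℝ))

variable {W : Matrix (Fin n) (Fin n) ℝ}

lemma mvE_ones (hrow : ∀ i, ∑ j, W i j = 1) : mvE W (onesE n) = onesE n := by
  ext i; simp [mvE_apply, onesE, hrow i]

lemma inner_eig_ones (hWsymm : W.IsHermitian) (hrow : ∀ i, ∑ j, W i j = 1)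
    {j : Fin n} (hj : hWsymm.eigenvalues j ≠ 1) :
    ⟪hWsymm.eigenvectorBasis j, onesE n⟫ = 0 := by
  have h := inner_mvE_eig hWsymm j (onesE n)
  rw [mvE_ones hrow] at h
  by_contra hne
  apply hj
  have h2 : (hWsymm.eigenvalues j - 1) * ⟪hWsymm.eigenvectorBasis j, onesE n⟫ = 0 := by
    linarith
  rcases mul_eq_zero.mp h2 with h3 | h3
  · linarith
  · exact absurd h3 hne

lemma lam_lower (hWt : (W ^ t).IsHermitian) {lam : ℝ}
    (hlam : IsLeast (Set.range hWt.eigenvalues) lam) (v : Vec n) :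
    lam * ⟪v, v⟫ ≤ ⟪v, mvE (W ^ t) v⟫ := by
  rw [parseval_inner hWt.eigenvectorBasis v v, parseval_inner hWt.eigenvectorBasis v (mvE _ v)]
  rw [Finset.mul_sum]
  refine Finset.sum_le_sum fun j _ => ?_
  rw [inner_mvE_eig hWt j v]
  have h1 : lam ≤ hWt.eigenvalues j := hlam.2 ⟨j, rfl⟩
  nlinarith [mul_self_nonneg (⟪hWt.eigenvectorBasis j, v⟫ : ℝ)]

lemma quad_upper (hWsymm : W.IsHermitian)
    (heig : ∀ i, hWsymm.eigenvalues i ∈ Set.Ioc (-1 : ℝ) 1) (v : Vec n) :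
    ⟪v, mvE (W ^ t) v⟫ ≤ ⟪v, v⟫ := by
  rw [parseval_inner hWsymm.eigenvectorBasis v v,
    parseval_inner hWsymm.eigenvectorBasis v (mvE _ v)]
  refine Finset.sum_le_sum fun j _ => ?_
  rw [inner_mvE_pow_eig hWsymm j t v]
  have h1 : |hWsymm.eigenvalues j| ≤ 1 := abs_le.mpr ⟨(heig j).1.le, (heig j).2⟩
  have h2 : hWsymm.eigenvalues j ^ t ≤ 1 := by
    calc hWsymm.eigenvalues j ^ t ≤ |hWsymm.eigenvalues j ^ t| := le_abs_self _
    _ = |hWsymm.eigenvalues j| ^ t := by rw [abs_pow]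
    _ ≤ 1 := pow_le_one₀ (abs_nonneg _) h1
  nlinarith [mul_self_nonneg (⟪hWsymm.eigenvectorBasis j, v⟫ : ℝ)]

lemma contractE (hWsymm : W.IsHermitian) (hn : 1 ≤ n) (hrow : ∀ i, ∑ j, W i j = 1)
    (hone : ∃! i, hWsymm.eigenvalues i = 1) {β : ℝ}
    (hβ : ∀ i, hWsymm.eigenvalues i ≠ 1 → |hWsymm.eigenvalues i| ≤ β)
    (z : Vec n) (hz : ∑ i, z i = 0) :
    ⟪mvE (W ^ t) z, mvE (W ^ t) z⟫ ≤ (β ^ t) ^ 2 * ⟪z, z⟫ := by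
  obtain ⟨i0, hi0, huniq⟩ := hone
  have hco : ∀ j, j ≠ i0 → ⟪hWsymm.eigenvectorBasis j, onesE n⟫ = 0 := fun j hj =>
    inner_eig_ones hWsymm hrow (fun h => hj (huniq j h))
  have hoz : ⟪onesE n, z⟫ = 0 := by rw [inner_E]; simpa [onesE] using hz
  have hci0 : ⟪hWsymm.eigenvectorBasis i0, z⟫ = 0 := by
    have h1 : ⟪onesE n, z⟫
        = ⟪hWsymm.eigenvectorBasis i0, onesE n⟫ * ⟪hWsymm.eigenvectorBasis i0, z⟫ := by
      rw [parseval_inner hWsymm.eigenvectorBasis]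
      exact Finset.sum_eq_single i0 (fun j _ hj => by rw [hco j hj, zero_mul])
        (fun h => absurd (Finset.mem_univ i0) h)
    have h2 : ⟪onesE n, onesE n⟫
        = ⟪hWsymm.eigenvectorBasis i0, onesE n⟫ * ⟪hWsymm.eigenvectorBasis i0, onesE n⟫ := by
      rw [parseval_inner hWsymm.eigenvectorBasis]
      exact Finset.sum_eq_single i0 (fun j _ hj => by rw [hco j hj, zero_mul])
        (fun h => absurd (Finset.mem_univ i0) h)
    have h3 : ⟪onesE n, onesE n⟫ = (n : ℝ) := by rw [inner_E]; simp [onesE]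
    have h4 : ⟪hWsymm.eigenvectorBasis i0, onesE n⟫ ≠ 0 := by
      intro h
      rw [h, mul_zero] at h2
      rw [h3] at h2
      have : (0:ℝ) < (n:ℝ) := by exact_mod_cast Nat.lt_of_lt_of_le Nat.zero_lt_one hn
      linarith
    rcases mul_eq_zero.mp (hoz ▸ h1.symm) with h | h
    · exact absurd h h4
    · exact h
  rw [parseval_inner hWsymm.eigenvectorBasis z z,
    parseval_inner hWsymm.eigenvectorBasis (mvE _ z) (mvE _ z), Finset.mul_sum]
  refine Finset.sum_le_sum fun j _ => ?_
  rw [inner_mvE_pow_eig hWsymm j t z]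
  by_cases hj : j = i0
  · subst hj; rw [hci0]; simp
  · have hb : |hWsymm.eigenvalues j| ≤ β := hβ j (fun h => hj (huniq j h))
    have h5 : hWsymm.eigenvalues j ^ 2 ≤ β ^ 2 := by
      rw [← sq_abs]; exact pow_le_pow_left₀ (abs_nonneg _) hb 2
    have h6 : (hWsymm.eigenvalues j ^ t) ^ 2 ≤ (β ^ t) ^ 2 := by
      rw [← pow_mul, ← pow_mul, mul_comm t 2, pow_mul, pow_mul]
      exact pow_le_pow_left₀ (sq_nonneg _) h5 t
    nlinarith [mul_self_nonneg (⟪hWsymm.eigenvectorBasis j, z⟫ : ℝ)]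

lemma rowsum_pow (hrow : ∀ i, ∑ j, W i j = 1) : ∀ (s : ℕ) i, ∑ j, (W ^ s) i j = 1 := by
  intro s
  induction s with
  | zero => intro i; simp [Matrix.one_apply]
  | succ m ih =>
      intro i
      have : ∀ j, (W ^ (m+1)) i j = ∑ k, W i k * (W ^ m) k j := by
        intro j
        rw [pow_succ', Matrix.mul_apply]
      simp only [this]
      rw [Finset.sum_comm]
      calc ∑ k, ∑ j, W i k * (W ^ m) k j = ∑ k, W i k * ∑ j, (W ^ m) k j := by
            exact Finset.sum_congr rfl fun k _ => by rw [Finset.mul_sum]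
      _ = ∑ k, W i k := by
            exact Finset.sum_congr rfl fun k _ => by rw [ih k, mul_one]
      _ = 1 := hrow i

/-! slices of concatenated vectors -/

variable {p : ℕ}

def vslice (x : CVec n p) (l : Fin p) : Vec n :=
  (WithLp.equiv 2 _).symm (fun i => x i l)

lemma vslice_apply (x : CVec n p) (l : Fin p) (i : Fin n) : vslice x l i = x i l := rfl

lemma kron_apply' (M : Matrix (Fin n) (Fin n) ℝ) (x : CVec n p) (i : Fin n) (l : Fin p) :
    kron M x i l = ∑ j, M i j * x j l := by
  show (∑ j, M i j • x j) l = _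
  rw [sum_apply_E]
  exact Finset.sum_congr rfl fun j _ => rfl

lemma vslice_kron (M : Matrix (Fin n) (Fin n) ℝ) (x : CVec n p) (l : Fin p) :
    vslice (kron M x) l = mvE M (vslice x l) := by
  ext i
  rw [vslice_apply, kron_apply', mvE_apply]
  exact Finset.sum_congr rfl fun j _ => rfl

lemma inner_CVec (x y : CVec n p) : ⟪x, y⟫ = ∑ i, ∑ l, x i l * y i l := by
  rw [PiLp.inner_apply]
  exact Finset.sum_congr rfl fun i _ => inner_E (x i) (y i)

lemma inner_vslice (x y : CVec n p) : ⟪x, y⟫ = ∑ l, ⟪vslice x l, vslice y l⟫ := by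
  rw [inner_CVec, Finset.sum_comm]
  exact Finset.sum_congr rfl fun l _ => (inner_E (vslice x l) (vslice y l)).symm

lemma sum_vslice (x : CVec n p) (l : Fin p) (h : ∑ i, x i = 0) : ∑ i, vslice x l i = 0 := by
  simp only [vslice_apply]
  rw [← sum_apply_E x l, h]
  rfl

lemma cvec_ext {x y : CVec n p} (h : ∀ i l, x i l = y i l) : x = y :=
  PiLp.ext fun i => PiLp.ext fun l => h i l

lemma cvec_add_apply (a b : CVec n p) (i : Fin n) (l : Fin p) : (a + b) i l = a i l + b i l := rfl
lemma cvec_sub_apply (a b : CVec n p) (i : Fin n) (l : Fin p) : (a - b) i l = a i l - b i l := rfl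
lemma cvec_neg_apply (a : CVec n p) (i : Fin n) (l : Fin p) : (-a) i l = -(a i l) := rfl
lemma cvec_smul_apply (c : ℝ) (a : CVec n p) (i : Fin n) (l : Fin p) :
    (c • a) i l = c * a i l := rfl
lemma cvec_zero_apply (i : Fin n) (l : Fin p) : (0 : CVec n p) i l = 0 := rfl

lemma kron_add (M : Matrix (Fin n) (Fin n) ℝ) (a b : CVec n p) :
    kron M (a + b) = kron M a + kron M b := by
  refine cvec_ext fun i l => ?_
  rw [cvec_add_apply, kron_apply', kron_apply', kron_apply', ← Finset.sum_add_distrib]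
  exact Finset.sum_congr rfl fun j _ => by rw [cvec_add_apply]; ring

lemma kron_neg (M : Matrix (Fin n) (Fin n) ℝ) (a : CVec n p) : kron M (-a) = -kron M a := by
  refine cvec_ext fun i l => ?_
  rw [cvec_neg_apply, kron_apply', kron_apply', ← Finset.sum_neg_distrib]
  exact Finset.sum_congr rfl fun j _ => by rw [cvec_neg_apply]; ring

lemma kron_sub (M : Matrix (Fin n) (Fin n) ℝ) (a b : CVec n p) :
    kron M (a - b) = kron M a - kron M b := by
  refine cvec_ext fun i l => ?_
  rw [cvec_sub_apply, kron_apply', kron_apply', kron_apply', ← Finset.sum_sub_distrib]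
  exact Finset.sum_congr rfl fun j _ => by rw [cvec_sub_apply]; ring

lemma kron_sym {M : Matrix (Fin n) (Fin n) ℝ} (hM : M.IsHermitian) (x y : CVec n p) :
    ⟪kron M x, y⟫ = ⟪x, kron M y⟫ := by
  rw [inner_vslice, inner_vslice]
  refine Finset.sum_congr rfl fun l _ => ?_
  rw [vslice_kron, vslice_kron]
  exact mvE_sym hM _ _

lemma kron_quad_lower (hWt : (W ^ t).IsHermitian) {lam : ℝ}
    (hlam : IsLeast (Set.range hWt.eigenvalues) lam) (x : CVec n p) :
    lam * ⟪x, x⟫ ≤ ⟪x, kron (W ^ t) x⟫ := by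
  rw [inner_vslice, inner_vslice, Finset.mul_sum]
  refine Finset.sum_le_sum fun l _ => ?_
  rw [vslice_kron]
  exact lam_lower hWt hlam _

lemma kron_quad_upper (hWsymm : W.IsHermitian)
    (heig : ∀ i, hWsymm.eigenvalues i ∈ Set.Ioc (-1 : ℝ) 1) (x : CVec n p) :
    ⟪x, kron (W ^ t) x⟫ ≤ ⟪x, x⟫ := by
  rw [inner_vslice, inner_vslice]
  refine Finset.sum_le_sum fun l _ => ?_
  rw [vslice_kron]
  exact quad_upper hWsymm heig _

lemma kron_contract (hWsymm : W.IsHermitian) (hn : 1 ≤ n)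
    (hrow : ∀ i, ∑ j, W i j = 1) (hone : ∃! i, hWsymm.eigenvalues i = 1) {β : ℝ}
    (hβ : ∀ i, hWsymm.eigenvalues i ≠ 1 → |hWsymm.eigenvalues i| ≤ β)
    (x : CVec n p) (hx : ∑ i, x i = 0) :
    ⟪kron (W ^ t) x, kron (W ^ t) x⟫ ≤ (β ^ t) ^ 2 * ⟪x, x⟫ := by
  rw [inner_vslice, inner_vslice, Finset.mul_sum]
  refine Finset.sum_le_sum fun l _ => ?_
  rw [vslice_kron]
  exact contractE hWsymm hn hrow hone hβ _ (sum_vslice x l hx)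

lemma norm_le_of_inner_le {H : Type*} [NormedAddCommGroup H] [InnerProductSpace ℝ H]
    {v : H} {c : ℝ} (hc : 0 ≤ c) (h : ⟪v, v⟫ ≤ c ^ 2) : ‖v‖ ≤ c := by
  rw [real_inner_self_eq_norm_sq] at h
  nlinarith [norm_nonneg v]

variable {F : Type*} [NormedAddCommGroup F] [InnerProductSpace ℝ F] [CompleteSpace F]

lemma descent_lemma (f : F → ℝ) (K : ℝ) (hK : 0 ≤ K) (hdiff : Differentiable ℝ f)
    (hLip : LipschitzWith K.toNNReal (fun z => gradient f z)) (x d : F) :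
    f (x + d) ≤ f x + ⟪gradient f x, d⟫ + K / 2 * ‖d‖ ^ 2 := by
  set A : ℝ := ⟪gradient f x, d⟫ with hA
  set B : ℝ := K / 2 * ‖d‖ ^ 2 with hB
  set g : ℝ → ℝ := fun s => f (x + s • d) - s * A - s ^ 2 * B with hgdef
  have hg : ∀ s : ℝ, HasDerivAt g
      ((⟪gradient f (x + s • d), d⟫ : ℝ) - A - 2 * s * B) s := by
    intro s
    have hc : HasDerivAt (fun s : ℝ => x + s • d) d s := by
      simpa using ((hasDerivAt_id s).smul_const d).const_add x
    have hf' : HasFDerivAt f (InnerProductSpace.toDual ℝ F (gradient f (x + s • d)))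
        (x + s • d) := (hdiff (x + s • d)).hasGradientAt
    have h1 : HasDerivAt (fun s : ℝ => f (x + s • d))
        ((⟪gradient f (x + s • d), d⟫ : ℝ)) s := by
      have := hf'.comp_hasDerivAt s hc
      rw [InnerProductSpace.toDual_apply_apply] at this
      exact this
    have h2 : HasDerivAt (fun s : ℝ => s * A) A s := by
      simpa using (hasDerivAt_id s).mul_const A
    have h3 : HasDerivAt (fun s : ℝ => s ^ 2 * B) (2 * s * B) s := by
      simpa using (hasDerivAt_pow 2 s).mul_const B
    exact (h1.sub h2).sub h3
  have hderiv_nonpos : ∀ s ∈ Set.Ioo (0:ℝ) 1, deriv g s ≤ 0 := by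
    intro s hs
    rw [(hg s).deriv]
    have hcs : (⟪gradient f (x + s • d) - gradient f x, d⟫ : ℝ)
        ≤ ‖gradient f (x + s • d) - gradient f x‖ * ‖d‖ := real_inner_le_norm _ _
    have hlip : ‖gradient f (x + s • d) - gradient f x‖ ≤ K * (s * ‖d‖) := by
      have := hLip.dist_le_mul (x + s • d) x
      rw [dist_eq_norm, dist_eq_norm] at this
      calc ‖gradient f (x + s • d) - gradient f x‖ ≤ K.toNNReal * ‖x + s • d - x‖ := this
      _ = K * (s * ‖d‖) := by
          rw [Real.coe_toNNReal K hK]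
          congr 1
          rw [add_sub_cancel_left, norm_smul, Real.norm_eq_abs, abs_of_pos hs.1]
    have hinner : (⟪gradient f (x + s • d), d⟫ : ℝ) - A ≤ K * s * ‖d‖ ^ 2 := by
      rw [hA]
      have h4 : (⟪gradient f (x + s • d), d⟫ : ℝ) - ⟪gradient f x, d⟫
          = ⟪gradient f (x + s • d) - gradient f x, d⟫ := by rw [inner_sub_left]
      rw [h4]
      calc (⟪gradient f (x + s • d) - gradient f x, d⟫ : ℝ)
          ≤ ‖gradient f (x + s • d) - gradient f x‖ * ‖d‖ := hcs
      _ ≤ K * (s * ‖d‖) * ‖d‖ := by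
          apply mul_le_mul_of_nonneg_right hlip (norm_nonneg d)
      _ = K * s * ‖d‖ ^ 2 := by ring
    rw [hB]
    nlinarith [hs.1.le]
  have hgdiff : Differentiable ℝ g := fun s => (hg s).differentiableAt
  have hanti : AntitoneOn g (Set.Icc (0:ℝ) 1) := by
    apply antitoneOn_of_deriv_nonpos (convex_Icc 0 1)
    · exact hgdiff.continuous.continuousOn
    · exact hgdiff.differentiableOn
    · intro s hs
      rw [interior_Icc] at hs
      exact hderiv_nonpos s hs
  have h01 : g 1 ≤ g 0 := hanti (Set.mem_Icc.mpr ⟨le_refl 0, zero_le_one⟩)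
    (Set.mem_Icc.mpr ⟨zero_le_one, le_refl 1⟩) zero_le_one
  have hg0 : g 0 = f x := by simp [hgdef]
  have hg1 : g 1 = f (x + d) - A - B := by simp [hgdef]
  rw [hg0, hg1] at h01
  linarith

lemma sq_grad_le_descent (f : F → ℝ) (K : ℝ) (hK : 0 < K) (hdiff : Differentiable ℝ f)
    (hLip : LipschitzWith K.toNNReal (fun z => gradient f z)) (xm : F)
    (hxm : ∀ z, f xm ≤ f z) (z : F) :
    ‖gradient f z‖ ^ 2 ≤ 2 * K * (f z - f xm) := by
  set G := gradient f z with hG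
  have h := descent_lemma f K hK.le hdiff hLip z (-(K⁻¹ • G))
  have h1 : (⟪G, -(K⁻¹ • G)⟫ : ℝ) = -(K⁻¹ * ‖G‖ ^ 2) := by
    rw [inner_neg_right, real_inner_smul_right, real_inner_self_eq_norm_sq]
  have h2 : ‖-(K⁻¹ • G)‖ ^ 2 = K⁻¹ ^ 2 * ‖G‖ ^ 2 := by
    rw [norm_neg, norm_smul, Real.norm_eq_abs, abs_of_pos (inv_pos.mpr hK), mul_pow]
  rw [h1, h2] at h
  have h3 := hxm (z + -(K⁻¹ • G))
  have hKne : K ≠ 0 := hK.ne'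
  have hle : f xm ≤ f z - K⁻¹ * ‖G‖ ^ 2 + K / 2 * (K⁻¹ ^ 2 * ‖G‖ ^ 2) := le_trans h3 h
  have hexp : K⁻¹ * ‖G‖ ^ 2 - K / 2 * (K⁻¹ ^ 2 * ‖G‖ ^ 2) = ‖G‖ ^ 2 / (2 * K) := by
    field_simp
    ring
  have h4 : ‖G‖ ^ 2 / (2 * K) ≤ f z - f xm := by linarith
  calc ‖G‖ ^ 2 = ‖G‖ ^ 2 / (2 * K) * (2 * K) := by field_simp
  _ ≤ (f z - f xm) * (2 * K) := by
      apply mul_le_mul_of_nonneg_right h4 (by positivity)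
  _ = 2 * K * (f z - f xm) := by ring

def constC {n p : ℕ} (v : Vec p) : CVec n p := WithLp.toLp 2 (fun _ => v)

lemma constC_apply {n p : ℕ} (v : Vec p) (i : Fin n) : constC (p := p) v i = v := rfl

lemma sum_blocks_sub {n p : ℕ} (a b : CVec n p) : ∑ i, (a - b) i = ∑ i, a i - ∑ i, b i := by
  rw [← Finset.sum_sub_distrib]
  exact Finset.sum_congr rfl fun i _ => rfl

lemma sum_blocks_smul {n p : ℕ} (c : ℝ) (a : CVec n p) : ∑ i, (c • a) i = c • ∑ i, a i := by
  rw [Finset.smul_sum]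
  exact Finset.sum_congr rfl fun i _ => rfl

lemma sum_sub_avg {n p : ℕ} (hn : 1 ≤ n) (y : CVec n p) :
    ∑ i, (y i - (n:ℝ)⁻¹ • ∑ j, y j) = 0 := by
  have hne : ((n:ℝ)) ≠ 0 := by
    have : (0:ℝ) < (n:ℝ) := by exact_mod_cast Nat.lt_of_lt_of_le Nat.zero_lt_one hn
    exact this.ne'
  rw [Finset.sum_sub_distrib, Finset.sum_const, Finset.card_univ, Fintype.card_fin,
    ← Nat.cast_smul_eq_nsmul ℝ, smul_smul, mul_inv_cancel₀ hne, one_smul, sub_self]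

lemma kron_constC {n p : ℕ} {A : Matrix (Fin n) (Fin n) ℝ} (hA : ∀ i, ∑ j, A i j = 1)
    (v : Vec p) : kron A (constC v) = constC v := by
  refine cvec_ext fun i l => ?_
  rw [kron_apply', constC_apply]
  calc ∑ j, A i j * (constC (n := n) v j) l = (∑ j, A i j) * v l := by
        rw [Finset.sum_mul]; exact Finset.sum_congr rfl fun j _ => rfl
  _ = v l := by rw [hA i, one_mul]

lemma sum_kron {n p : ℕ} {A : Matrix (Fin n) (Fin n) ℝ} (hA : ∀ j, ∑ i, A i j = 1)
    (y : CVec n p) : ∑ i, kron A y i = ∑ i, y i := by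
  ext l
  rw [sum_apply_E, sum_apply_E]
  simp only [kron_apply']
  rw [Finset.sum_comm]
  calc ∑ j, ∑ i, A i j * y j l = ∑ j, (∑ i, A i j) * y j l := by
        exact Finset.sum_congr rfl fun j _ => by rw [Finset.sum_mul]
  _ = ∑ j, y j l := Finset.sum_congr rfl fun j _ => by rw [hA j, one_mul]

lemma norm_center_le {n p : ℕ} (hn : 1 ≤ n) (y : CVec n p) :
    ‖y - constC ((n:ℝ)⁻¹ • ∑ j, y j)‖ ≤ ‖y‖ := by
  set c : Vec p := (n:ℝ)⁻¹ • ∑ j, y j with hc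
  set w : CVec n p := y - constC c with hw
  have hsw : ∑ i, w i = 0 := by
    have : ∀ i, w i = y i - (n:ℝ)⁻¹ • ∑ j, y j := fun i => rfl
    simp only [this]
    exact sum_sub_avg hn y
  have horth : ⟪constC (n := n) c, w⟫ = 0 := by
    rw [PiLp.inner_apply]
    calc ∑ i, ⟪(constC (n := n) c) i, w i⟫ = ∑ i, ⟪c, w i⟫ := rfl
    _ = ⟪c, ∑ i, w i⟫ := (inner_sum _ _ _).symm
    _ = 0 := by rw [hsw, inner_zero_right]
  apply norm_le_of_inner_le (norm_nonneg y)
  have hdecomp : y = w + constC c := by rw [hw]; abel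
  have hexp : ⟪y, y⟫ = ⟪w, w⟫ + 2 * ⟪constC (n := n) c, w⟫ + ⟪constC (n := n) c, constC (n := n) c⟫ := by
    conv_lhs => rw [hdecomp]
    rw [inner_add_left, inner_add_right, inner_add_right,
      real_inner_comm w (constC c)]
    ring
  have h2 : (0:ℝ) ≤ ⟪constC (n := n) c, constC (n := n) c⟫ := real_inner_self_nonneg
  rw [real_inner_self_eq_norm_sq y] at hexp
  linarith

end Aux

/-! ### Main theorem -/

set_option maxHeartbeats 1000000

/-- if `α ≤ (1 + λₙ(Wᵗ))/L` and `x₀ = 0`, then for all `k ≥ 1` and all `i`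
the DGDᵗ iterates satisfy `‖∇fᵢ(x_{i,k}) − ∇fᵢ(x̄_k)‖ ≤ αDLᵢ/(1 − βᵗ)` and
`‖g_k − ḡ_k‖ ≤ αDL/(1 − βᵗ)`. -/
theorem dgdt_bounded_gradient_deviation
    (n p t : ℕ) (hn : 1 ≤ n) (hp : 1 ≤ p) (ht : 1 ≤ t)
    -- local objective functions: convex, differentiable, with Lᵢ-Lipschitz gradients
    (f : Fin n → Vec p → ℝ) (Lc : Fin n → ℝ) (L : ℝ)
    (hconv : ∀ i, ConvexOn ℝ Set.univ (f i))
    (hdiff : ∀ i, Differentiable ℝ (f i))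
    (hLpos : ∀ i, 0 < Lc i)
    (hLip : ∀ i, LipschitzWith (Real.toNNReal (Lc i)) (fun z => gradient (f i) z))
    (hLmax : IsGreatest (Set.range Lc) L)
    -- each fᵢ attains its minimum at xsᵢ
    (xs : Fin n → Vec p) (hxs : ∀ i, ∀ z, f i (xs i) ≤ f i z)
    -- W is symmetric, doubly stochastic, with eigenvalues in (−1, 1],
    -- exactly one eigenvalue equal to 1
    (W : Matrix (Fin n) (Fin n) ℝ) (hWsymm : W.IsHermitian)
    (hrow : ∀ i, ∑ j, W i j = 1) (hcol : ∀ j, ∑ i, W i j = 1)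
    (hWnn : ∀ i j, 0 ≤ W i j)
    (heig : ∀ i, hWsymm.eigenvalues i ∈ Set.Ioc (-1 : ℝ) 1)
    (hone : ∃! i, hWsymm.eigenvalues i = 1)
    -- β ∈ (0,1): the second largest magnitude of the eigenvalues of W
    (β : ℝ) (hβmem : β ∈ Set.Ioo (0 : ℝ) 1)
    (hβ : IsGreatest {r : ℝ | ∃ i, hWsymm.eigenvalues i ≠ 1 ∧ r = |hWsymm.eigenvalues i|} β)
    -- λₙ(Wᵗ): the smallest eigenvalue of Wᵗ
    (hWt : (W ^ t).IsHermitian)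
    (lam : ℝ) (hlam : IsLeast (Set.range hWt.eigenvalues) lam)
    -- stepsize condition α ≤ (1 + λₙ(Wᵗ))/L
    (α : ℝ) (hα : 0 < α) (hαle : α ≤ (1 + lam) / L)
    -- DGDᵗ iterates starting from x₀ = 0
    (x : ℕ → CVec n p) (hx0 : x 0 = 0)
    (hiter : ∀ k, x (k + 1) = kron (W ^ t) (x k) - α • gradConcat f (x k))
    -- the gradient bound D
    (D : ℝ) (hD : D = Real.sqrt (2 * L * ∑ i, (f i 0 - f i (xs i))))
    -- the mean iterate, the averaged gradients g and ḡ
    (xbar : ℕ → Vec p) (hxbar : ∀ k, xbar k = (n : ℝ)⁻¹ • ∑ i, x k i)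
    (g gbar : ℕ → Vec p)
    (hg : ∀ k, g k = (n : ℝ)⁻¹ • ∑ i, gradient (f i) (x k i))
    (hgbar : ∀ k, gbar k = (n : ℝ)⁻¹ • ∑ i, gradient (f i) (xbar k)) :
    ∀ k, 1 ≤ k →
      (∀ i, ‖gradient (f i) (x k i) - gradient (f i) (xbar k)‖ ≤ α * D * Lc i / (1 - β ^ t)) ∧
      ‖g k - gbar k‖ ≤ α * D * L / (1 - β ^ t) := by
  -- basic positivity facts
  obtain ⟨hLmem, hLub⟩ := hLmax
  obtain ⟨iL, hiL⟩ := hLmem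
  have hLpos' : 0 < L := hiL ▸ hLpos iL
  have hLile : ∀ i, Lc i ≤ L := fun i => hLub ⟨i, rfl⟩
  have hβ0 : 0 < β := hβmem.1
  have hβt1 : β ^ t < 1 := pow_lt_one₀ hβ0.le hβmem.2 (by omega)
  have hβtpos : 0 < 1 - β ^ t := by linarith
  have hβtnn : 0 ≤ β ^ t := pow_nonneg hβ0.le t
  have hDnn : 0 ≤ D := hD ▸ Real.sqrt_nonneg _
  have hterm : ∀ i, 0 ≤ f i 0 - f i (xs i) := fun i => sub_nonneg.mpr (hxs i 0)
  have hD2 : D ^ 2 = 2 * L * ∑ i, (f i 0 - f i (xs i)) := by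
    rw [hD]
    exact Real.sq_sqrt (mul_nonneg (by linarith) (Finset.sum_nonneg fun i _ => hterm i))
  have hαL : α * L ≤ 1 + lam := (le_div_iff₀ hLpos').mp hαle
  have hβbound : ∀ i, hWsymm.eigenvalues i ≠ 1 → |hWsymm.eigenvalues i| ≤ β :=
    fun i h => hβ.2 ⟨i, h, rfl⟩
  have hrowM : ∀ i, ∑ j, (W ^ t) i j = 1 := rowsum_pow hrow t
  have hMsymm : ∀ i j, (W ^ t) i j = (W ^ t) j i := fun i j => by
    conv_lhs => rw [← hWt]
    simp [Matrix.conjTranspose_apply]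
  have hcolM : ∀ j, ∑ i, (W ^ t) i j = 1 := fun j => by
    calc ∑ i, (W ^ t) i j = ∑ i, (W ^ t) j i := Finset.sum_congr rfl fun i _ => hMsymm i j
    _ = 1 := hrowM j
  -- per-block descent lemma with the uniform constant L
  have hFdesc : ∀ i (a d : Vec p),
      f i (a + d) ≤ f i a + ⟪gradient (f i) a, d⟫ + L / 2 * ‖d‖ ^ 2 := by
    intro i a d
    have h := descent_lemma (f i) (Lc i) (hLpos i).le (hdiff i) (hLip i) a d
    have h2 : Lc i / 2 * ‖d‖ ^ 2 ≤ L / 2 * ‖d‖ ^ 2 := by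
      apply mul_le_mul_of_nonneg_right _ (sq_nonneg _)
      linarith [hLile i]
    linarith
  -- block norms
  have hGnormsq : ∀ y : CVec n p, (⟪y, y⟫ : ℝ) = ∑ i, ‖y i‖ ^ 2 := fun y => by
    rw [PiLp.inner_apply]
    exact Finset.sum_congr rfl fun i _ => real_inner_self_eq_norm_sq (y i)
  -- Lyapunov function value along iterates
  set vφ : ℕ → ℝ := fun m =>
    ((⟪x m, x m⟫ : ℝ) - ⟪x m, kron (W ^ t) (x m)⟫) / 2 + α * ∑ i, f i (x m i) with hvφ
  have hstep : ∀ m, vφ (m + 1) ≤ vφ m := by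
    intro m
    set y : CVec n p := x m with hy
    set G : CVec n p := (y - kron (W ^ t) y) + α • gradConcat f y with hGdef
    have hx1 : x (m + 1) = y + -G := by
      rw [hiter m, hGdef]
      abel
    have hq1 : (⟪y + -G, y + -G⟫ : ℝ) = ⟪y, y⟫ - 2 * ⟪G, y⟫ + ⟪G, G⟫ := by
      rw [inner_add_left, inner_add_right, inner_add_right, inner_neg_left, inner_neg_right,
        inner_neg_left, inner_neg_right, real_inner_comm y G]
      ring
    have hq2 : (⟪y + -G, kron (W ^ t) (y + -G)⟫ : ℝ)
        = ⟪y, kron (W ^ t) y⟫ - 2 * ⟪G, kron (W ^ t) y⟫ + ⟪G, kron (W ^ t) G⟫ := by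
      rw [kron_add, kron_neg, inner_add_left, inner_add_right, inner_add_right,
        inner_neg_left, inner_neg_right, inner_neg_left, inner_neg_right]
      have hsym1 : (⟪y, kron (W ^ t) G⟫ : ℝ) = ⟪kron (W ^ t) y, G⟫ := (kron_sym hWt y G).symm
      rw [hsym1, real_inner_comm (kron (W ^ t) y) G]
      ring
    have hF : (∑ i, f i ((y + -G) i))
        ≤ (∑ i, f i (y i)) + ⟪gradConcat f y, -G⟫ + L / 2 * ⟪G, G⟫ := by
      have hGG' : (⟪G, G⟫ : ℝ) = ∑ i, ‖(-G : CVec n p) i‖ ^ 2 := by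
        rw [← hGnormsq]
        rw [inner_neg_left, inner_neg_right, neg_neg]
      rw [hGG', PiLp.inner_apply]
      rw [Finset.mul_sum, ← Finset.sum_add_distrib, ← Finset.sum_add_distrib]
      refine Finset.sum_le_sum fun i _ => ?_
      have := hFdesc i (y i) ((-G : CVec n p) i)
      exact this
    have hGG : (⟪G, G⟫ : ℝ) = ⟪G, y⟫ - ⟪G, kron (W ^ t) y⟫ + α * ⟪G, gradConcat f y⟫ := by
      nth_rewrite 2 [hGdef]
      rw [inner_add_right, inner_sub_right, real_inner_smul_right]
    have hlow : lam * ⟪G, G⟫ ≤ (⟪G, kron (W ^ t) G⟫ : ℝ) := kron_quad_lower hWt hlam G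
    have hGnn : (0:ℝ) ≤ ⟪G, G⟫ := real_inner_self_nonneg
    have hgrad_inner : (⟪gradConcat f y, -G⟫ : ℝ) = -⟪G, gradConcat f y⟫ := by
      rw [inner_neg_right, real_inner_comm]
    have hφ1 : vφ (m + 1) = ((⟪y + -G, y + -G⟫ : ℝ) - ⟪y + -G, kron (W ^ t) (y + -G)⟫) / 2
        + α * ∑ i, f i ((y + -G) i) := by
      rw [hvφ]
      simp only [hx1]
    rw [hφ1, hq1, hq2]
    have hφ0 : vφ m = ((⟪y, y⟫ : ℝ) - ⟪y, kron (W ^ t) y⟫) / 2 + α * ∑ i, f i (y i) := rfl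
    rw [hφ0]
    have hFbd : α * (∑ i, f i ((y + -G) i))
        ≤ α * ((∑ i, f i (y i)) + ⟪gradConcat f y, -G⟫ + L / 2 * ⟪G, G⟫) :=
      mul_le_mul_of_nonneg_left hF hα.le
    rw [hgrad_inner] at hFbd
    rw [mul_add, mul_add, mul_neg] at hFbd
    have hkey : 0 ≤ (1 + lam - α * L) * (⟪G, G⟫ : ℝ) := mul_nonneg (by linarith) hGnn
    linarith [hFbd, hGG, hlow, hkey]
  have hval0 : vφ 0 = α * ∑ i, f i 0 := by
    rw [hvφ]
    simp only [hx0]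
    have h1 : (⟪(0 : CVec n p), (0 : CVec n p)⟫ : ℝ) = 0 := inner_zero_left _
    have h2 : (⟪(0 : CVec n p), kron (W ^ t) 0⟫ : ℝ) = 0 := inner_zero_left _
    rw [h1, h2]
    norm_num
  have hvk : ∀ m, vφ m ≤ α * ∑ i, f i 0 := by
    intro m
    induction m with
    | zero => rw [hval0]
    | succ s ih => exact le_trans (hstep s) ih
  have hFb : ∀ m, ∑ i, f i (x m i) ≤ ∑ i, f i 0 := by
    intro m
    have hq : (⟪x m, kron (W ^ t) (x m)⟫ : ℝ) ≤ ⟪x m, x m⟫ := kron_quad_upper hWsymm heig _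
    have h1 : α * ∑ i, f i (x m i) ≤ vφ m := by
      rw [hvφ]
      simp only
      linarith
    have h2 : α * ∑ i, f i (x m i) ≤ α * ∑ i, f i 0 := le_trans h1 (hvk m)
    exact le_of_mul_le_mul_left h2 hα
  -- uniform bound on the concatenated gradient
  have hgradD : ∀ m, ‖gradConcat f (x m)‖ ≤ D := by
    intro m
    apply norm_le_of_inner_le hDnn
    have h1 : (⟪gradConcat f (x m), gradConcat f (x m)⟫ : ℝ)
        = ∑ i, ‖gradient (f i) (x m i)‖ ^ 2 := hGnormsq _
    have h2 : ∀ i, ‖gradient (f i) (x m i)‖ ^ 2 ≤ 2 * L * (f i (x m i) - f i (xs i)) := by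
      intro i
      have h3 := sq_grad_le_descent (f i) (Lc i) (hLpos i) (hdiff i) (hLip i) (xs i)
        (hxs i) (x m i)
      have h4 : 0 ≤ f i (x m i) - f i (xs i) := sub_nonneg.mpr (hxs i (x m i))
      nlinarith [hLile i, hLpos i]
    have h5 : (⟪gradConcat f (x m), gradConcat f (x m)⟫ : ℝ)
        ≤ 2 * L * ∑ i, (f i (x m i) - f i (xs i)) := by
      rw [h1, Finset.mul_sum]
      exact Finset.sum_le_sum fun i _ => h2 i
    have h6 : ∑ i, (f i (x m i) - f i (xs i)) ≤ ∑ i, (f i 0 - f i (xs i)) := by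
      rw [Finset.sum_sub_distrib, Finset.sum_sub_distrib]
      have := hFb m
      linarith
    rw [hD2]
    calc (⟪gradConcat f (x m), gradConcat f (x m)⟫ : ℝ)
        ≤ 2 * L * ∑ i, (f i (x m i) - f i (xs i)) := h5
    _ ≤ 2 * L * ∑ i, (f i 0 - f i (xs i)) := by
        apply mul_le_mul_of_nonneg_left h6 (by linarith)
  -- the consensus error
  set e : ℕ → CVec n p := fun m => x m - constC ((n:ℝ)⁻¹ • ∑ j, x m j) with hedef
  have hsum_e : ∀ m, ∑ i, e m i = 0 := by
    intro m
    have : ∀ i, e m i = x m i - (n:ℝ)⁻¹ • ∑ j, x m j := fun i => rfl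
    simp only [this]
    exact sum_sub_avg hn (x m)
  have herec : ∀ m, e (m + 1) = kron (W ^ t) (e m)
      - α • (gradConcat f (x m) - constC ((n:ℝ)⁻¹ • ∑ j, gradConcat f (x m) j)) := by
    intro m
    have havg : (n:ℝ)⁻¹ • ∑ j, x (m+1) j
        = ((n:ℝ)⁻¹ • ∑ j, x m j) - α • ((n:ℝ)⁻¹ • ∑ j, gradConcat f (x m) j) := by
      rw [hiter m, sum_blocks_sub, sum_blocks_smul, sum_kron hcolM, smul_sub]
      rw [smul_comm]
    have hstep1 : e (m+1) = x (m+1) - constC ((n:ℝ)⁻¹ • ∑ j, x (m+1) j) := rfl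
    rw [hstep1, havg, hiter m]
    have hconst_sub : (constC (((n:ℝ)⁻¹ • ∑ j, x m j) - α • ((n:ℝ)⁻¹ • ∑ j, gradConcat f (x m) j)) : CVec n p)
        = constC ((n:ℝ)⁻¹ • ∑ j, x m j) - α • constC ((n:ℝ)⁻¹ • ∑ j, gradConcat f (x m) j) := by
      refine cvec_ext fun i l => ?_
      rw [cvec_sub_apply, constC_apply, constC_apply, cvec_smul_apply, constC_apply]
      rfl
    rw [hconst_sub]
    have hkc : kron (W ^ t) (e m) = kron (W ^ t) (x m) - constC ((n:ℝ)⁻¹ • ∑ j, x m j) := by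
      rw [hedef]
      simp only
      rw [kron_sub, kron_constC hrowM]
    rw [hkc, smul_sub]
    abel
  have hebound : ∀ m, ‖e m‖ ≤ α * D / (1 - β ^ t) := by
    intro m
    induction m with
    | zero =>
        have he0 : e 0 = 0 := by
          rw [hedef]
          simp only [hx0]
          have hz : ∑ j, (0 : CVec n p) j = 0 := by
            refine Finset.sum_eq_zero fun j _ => rfl
          rw [hz, smul_zero]
          show (0 : CVec n p) - constC 0 = 0
          have hcz : (constC (0 : Vec p) : CVec n p) = 0 := rfl
          rw [hcz, sub_zero]
        rw [he0, norm_zero]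
        positivity
    | succ s ih =>
        rw [herec s]
        have htri : ‖kron (W ^ t) (e s)
            - α • (gradConcat f (x s) - constC ((n:ℝ)⁻¹ • ∑ j, gradConcat f (x s) j))‖
            ≤ ‖kron (W ^ t) (e s)‖
              + α * ‖gradConcat f (x s) - constC ((n:ℝ)⁻¹ • ∑ j, gradConcat f (x s) j)‖ := by
          calc _ ≤ ‖kron (W ^ t) (e s)‖
              + ‖α • (gradConcat f (x s) - constC ((n:ℝ)⁻¹ • ∑ j, gradConcat f (x s) j))‖ :=
            norm_sub_le _ _
          _ = _ := by rw [norm_smul, Real.norm_eq_abs, abs_of_pos hα]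
        have hc1 : ‖kron (W ^ t) (e s)‖ ≤ β ^ t * ‖e s‖ := by
          apply norm_le_of_inner_le (mul_nonneg hβtnn (norm_nonneg _))
          have := kron_contract (t := t) hWsymm hn hrow hone hβbound (e s) (hsum_e s)
          calc (⟪kron (W ^ t) (e s), kron (W ^ t) (e s)⟫ : ℝ)
              ≤ (β ^ t) ^ 2 * ⟪e s, e s⟫ := this
          _ = (β ^ t * ‖e s‖) ^ 2 := by
              rw [real_inner_self_eq_norm_sq]; ring
        have hc2 : ‖gradConcat f (x s) - constC ((n:ℝ)⁻¹ • ∑ j, gradConcat f (x s) j)‖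
            ≤ D := le_trans (norm_center_le hn _) (hgradD s)
        have hrec : β ^ t * ‖e s‖ + α * D ≤ β ^ t * (α * D / (1 - β ^ t)) + α * D := by
          have := mul_le_mul_of_nonneg_left ih hβtnn
          linarith
        have heq : β ^ t * (α * D / (1 - β ^ t)) + α * D = α * D / (1 - β ^ t) := by
          field_simp
          ring
        calc _ ≤ ‖kron (W ^ t) (e s)‖
            + α * ‖gradConcat f (x s) - constC ((n:ℝ)⁻¹ • ∑ j, gradConcat f (x s) j)‖ := htri
        _ ≤ β ^ t * ‖e s‖ + α * D := by
            have := mul_le_mul_of_nonneg_left hc2 hα.le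
            linarith
        _ ≤ β ^ t * (α * D / (1 - β ^ t)) + α * D := hrec
        _ = α * D / (1 - β ^ t) := heq
  -- conclusion
  intro k hk
  have hblock : ∀ i, ‖x k i - xbar k‖ ≤ α * D / (1 - β ^ t) := by
    intro i
    have h1 : e k i = x k i - xbar k := by
      rw [hxbar k]
      rfl
    have h2 : ‖e k i‖ ≤ ‖e k‖ := by
      apply norm_le_of_inner_le (norm_nonneg (e k))
      rw [real_inner_self_eq_norm_sq]
      have h3 : (⟪e k, e k⟫ : ℝ) = ∑ j, ‖e k j‖ ^ 2 := hGnormsq _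
      have h4 : ‖e k i‖ ^ 2 ≤ ∑ j, ‖e k j‖ ^ 2 :=
        Finset.single_le_sum (f := fun j => ‖e k j‖ ^ 2) (fun j _ => sq_nonneg _)
          (Finset.mem_univ i)
      rw [real_inner_self_eq_norm_sq] at h3
      linarith
    rw [← h1]
    exact le_trans h2 (hebound k)
  have hpart1 : ∀ i, ‖gradient (f i) (x k i) - gradient (f i) (xbar k)‖
      ≤ α * D * Lc i / (1 - β ^ t) := by
    intro i
    have hlip := (hLip i).dist_le_mul (x k i) (xbar k)
    rw [dist_eq_norm, dist_eq_norm, Real.coe_toNNReal _ (hLpos i).le] at hlip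
    calc ‖gradient (f i) (x k i) - gradient (f i) (xbar k)‖
        ≤ Lc i * ‖x k i - xbar k‖ := hlip
    _ ≤ Lc i * (α * D / (1 - β ^ t)) :=
        mul_le_mul_of_nonneg_left (hblock i) (hLpos i).le
    _ = α * D * Lc i / (1 - β ^ t) := by ring
  refine ⟨hpart1, ?_⟩
  have hgdiff : g k - gbar k
      = (n:ℝ)⁻¹ • ∑ i, (gradient (f i) (x k i) - gradient (f i) (xbar k)) := by
    rw [hg k, hgbar k, ← smul_sub, ← Finset.sum_sub_distrib]
  rw [hgdiff]
  have hnpos : (0:ℝ) < (n:ℝ) := by exact_mod_cast Nat.lt_of_lt_of_le Nat.zero_lt_one hn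
  calc ‖(n:ℝ)⁻¹ • ∑ i, (gradient (f i) (x k i) - gradient (f i) (xbar k))‖
      = (n:ℝ)⁻¹ * ‖∑ i, (gradient (f i) (x k i) - gradient (f i) (xbar k))‖ := by
        rw [norm_smul, Real.norm_eq_abs, abs_of_pos (inv_pos.mpr hnpos)]
  _ ≤ (n:ℝ)⁻¹ * ∑ i, ‖gradient (f i) (x k i) - gradient (f i) (xbar k)‖ := by
        apply mul_le_mul_of_nonneg_left (norm_sum_le _ _) (inv_pos.mpr hnpos).le
  _ ≤ (n:ℝ)⁻¹ * ∑ i : Fin n, (α * D * L / (1 - β ^ t)) := by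
        apply mul_le_mul_of_nonneg_left _ (inv_pos.mpr hnpos).le
        refine Finset.sum_le_sum fun i _ => ?_
        refine le_trans (hpart1 i) ?_
        have hnum : α * D * Lc i ≤ α * D * L :=
          mul_le_mul_of_nonneg_left (hLile i) (mul_nonneg hα.le hDnn)
        rw [div_le_div_iff₀ hβtpos hβtpos]
        exact mul_le_mul_of_nonneg_right hnum hβtpos.le
  _ = α * D * L / (1 - β ^ t) := by
        rw [Finset.sum_const, Finset.card_univ, Fintype.card_fin, nsmul_eq_mul]
        field_simp
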